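/- If r > 3/√11 - 1/2, then the Moser spindle can be embedded in the open annulus {p : 1/2 - r < ‖p‖ < 1/2 + r}: there exist seven points in the open annulus whose unit-distance graph is the Moser spindle. -/

import Mathlib

def openAnnulus (r : ℝ) : Set ℂ := {p : ℂ | 1 / 2 - r < ‖p‖ ∧ ‖p‖ < 1 / 2 + r}

/-- The adjacency relation of the Moser spindle on vertex set `Fin 7`:
two rhombi `0-1-2-3` and `0-4-5-6` (each a pair of unit equilateral triangles sharing an
edge) joined at the common vertex `0`, with the far tips `3` and `6` adjacent. -/
def moserAdj (i j : Fin 7) : Prop :=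
  ({i.val, j.val} : Finset ℕ) ∈
    ({{0, 1}, {0, 2}, {1, 2}, {1, 3}, {2, 3},
      {0, 4}, {0, 5}, {4, 5}, {4, 6}, {5, 6}, {3, 6}} : Finset (Finset ℕ))

noncomputable def mpA : ℝ := Real.sqrt 3
noncomputable def mpB : ℝ := Real.sqrt 11

lemma mpA_sq : mpA ^ 2 = 3 := Real.sq_sqrt (by norm_num)
lemma mpB_sq : mpB ^ 2 = 11 := Real.sq_sqrt (by norm_num)
lemma mpA_pos : 0 < mpA := Real.sqrt_pos.mpr (by norm_num)
lemma mpB_pos : 0 < mpB := Real.sqrt_pos.mpr (by norm_num)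
lemma mpAB_sq : (mpA * mpB) ^ 2 = 33 := by
  rw [mul_pow, mpA_sq, mpB_sq]; norm_num
lemma mpAB_pos : 0 < mpA * mpB := mul_pos mpA_pos mpB_pos

noncomputable def mpV : Fin 7 → ℂ :=
  ![⟨0, -3 * mpB / 11⟩,
    ⟨1/4 - mpA * mpB / 12, mpA / 12 - mpB / 44⟩,
    ⟨1/4 + mpA * mpB / 12, -mpA / 12 - mpB / 44⟩,
    ⟨1/2, 5 * mpB / 22⟩,
    ⟨-1/4 + mpA * mpB / 12, mpA / 12 - mpB / 44⟩,
    ⟨-1/4 - mpA * mpB / 12, -mpA / 12 - mpB / 44⟩,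
    ⟨-1/2, 5 * mpB / 22⟩]

lemma norm_eq_one_of {z : ℂ} (h : Complex.normSq z = 1) : ‖z‖ = 1 := by
  rw [Complex.norm_def, h, Real.sqrt_one]

lemma norm_ne_one_of {z : ℂ} (h : Complex.normSq z ≠ 1) : ‖z‖ ≠ 1 := by
  intro hc
  apply h
  rw [Complex.norm_def] at hc
  have h2 := Real.sq_sqrt (Complex.normSq_nonneg z)
  rw [hc] at h2
  linarith [h2]

lemma mpV_0 : mpV 0 = ⟨0, -3 * mpB / 11⟩ := rfl

lemma mpV_1 : mpV 1 = ⟨1/4 - mpA * mpB / 12, mpA / 12 - mpB / 44⟩ := rfl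

lemma mpV_2 : mpV 2 = ⟨1/4 + mpA * mpB / 12, -mpA / 12 - mpB / 44⟩ := rfl

lemma mpV_3 : mpV 3 = ⟨1/2, 5 * mpB / 22⟩ := rfl

lemma mpV_4 : mpV 4 = ⟨-1/4 + mpA * mpB / 12, mpA / 12 - mpB / 44⟩ := rfl

lemma mpV_5 : mpV 5 = ⟨-1/4 - mpA * mpB / 12, -mpA / 12 - mpB / 44⟩ := rfl

lemma mpV_6 : mpV 6 = ⟨-1/2, 5 * mpB / 22⟩ := rfl

lemma mpd_0_1 : Complex.normSq (mpV 0 - mpV 1) = (1) := by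
  rw [mpV_0, mpV_1]
  simp only [Complex.normSq_apply, Complex.sub_re, Complex.sub_im]
  linear_combination (1/144) * mpA_sq + (1/16) * mpB_sq + (1/144) * mpAB_sq

lemma mpd_0_2 : Complex.normSq (mpV 0 - mpV 2) = (1) := by
  rw [mpV_0, mpV_2]
  simp only [Complex.normSq_apply, Complex.sub_re, Complex.sub_im]
  linear_combination (1/144) * mpA_sq + (1/16) * mpB_sq + (1/144) * mpAB_sq

lemma mpd_0_3 : Complex.normSq (mpV 0 - mpV 3) = (3) := by
  rw [mpV_0, mpV_3]
  simp only [Complex.normSq_apply, Complex.sub_re, Complex.sub_im]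
  linear_combination (1/4) * mpB_sq

lemma mpd_0_4 : Complex.normSq (mpV 0 - mpV 4) = (1) := by
  rw [mpV_0, mpV_4]
  simp only [Complex.normSq_apply, Complex.sub_re, Complex.sub_im]
  linear_combination (1/144) * mpA_sq + (1/16) * mpB_sq + (1/144) * mpAB_sq

lemma mpd_0_5 : Complex.normSq (mpV 0 - mpV 5) = (1) := by
  rw [mpV_0, mpV_5]
  simp only [Complex.normSq_apply, Complex.sub_re, Complex.sub_im]
  linear_combination (1/144) * mpA_sq + (1/16) * mpB_sq + (1/144) * mpAB_sq

lemma mpd_0_6 : Complex.normSq (mpV 0 - mpV 6) = (3) := by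
  rw [mpV_0, mpV_6]
  simp only [Complex.normSq_apply, Complex.sub_re, Complex.sub_im]
  linear_combination (1/4) * mpB_sq

lemma mpd_1_2 : Complex.normSq (mpV 1 - mpV 2) = (1) := by
  rw [mpV_1, mpV_2]
  simp only [Complex.normSq_apply, Complex.sub_re, Complex.sub_im]
  linear_combination (1/36) * mpA_sq + (1/36) * mpAB_sq

lemma mpd_1_3 : Complex.normSq (mpV 1 - mpV 3) = (1) := by
  rw [mpV_1, mpV_3]
  simp only [Complex.normSq_apply, Complex.sub_re, Complex.sub_im]
  linear_combination (1/144) * mpA_sq + (1/16) * mpB_sq + (1/144) * mpAB_sq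

lemma mpd_1_4 : Complex.normSq (mpV 1 - mpV 4) = (7/6) + (-1/6) * (mpA * mpB) := by
  rw [mpV_1, mpV_4]
  simp only [Complex.normSq_apply, Complex.sub_re, Complex.sub_im]
  linear_combination (1/36) * mpAB_sq

lemma mpd_1_5 : Complex.normSq (mpV 1 - mpV 5) = (1/3) := by
  rw [mpV_1, mpV_5]
  simp only [Complex.normSq_apply, Complex.sub_re, Complex.sub_im]
  linear_combination (1/36) * mpA_sq

lemma mpd_1_6 : Complex.normSq (mpV 1 - mpV 6) = (3/2) + (-1/6) * (mpA * mpB) := by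
  rw [mpV_1, mpV_6]
  simp only [Complex.normSq_apply, Complex.sub_re, Complex.sub_im]
  linear_combination (1/144) * mpA_sq + (1/16) * mpB_sq + (1/144) * mpAB_sq

lemma mpd_2_3 : Complex.normSq (mpV 2 - mpV 3) = (1) := by
  rw [mpV_2, mpV_3]
  simp only [Complex.normSq_apply, Complex.sub_re, Complex.sub_im]
  linear_combination (1/144) * mpA_sq + (1/16) * mpB_sq + (1/144) * mpAB_sq

lemma mpd_2_4 : Complex.normSq (mpV 2 - mpV 4) = (1/3) := by
  rw [mpV_2, mpV_4]
  simp only [Complex.normSq_apply, Complex.sub_re, Complex.sub_im]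
  linear_combination (1/36) * mpA_sq

lemma mpd_2_5 : Complex.normSq (mpV 2 - mpV 5) = (7/6) + (1/6) * (mpA * mpB) := by
  rw [mpV_2, mpV_5]
  simp only [Complex.normSq_apply, Complex.sub_re, Complex.sub_im]
  linear_combination (1/36) * mpAB_sq

lemma mpd_2_6 : Complex.normSq (mpV 2 - mpV 6) = (3/2) + (1/6) * (mpA * mpB) := by
  rw [mpV_2, mpV_6]
  simp only [Complex.normSq_apply, Complex.sub_re, Complex.sub_im]
  linear_combination (1/144) * mpA_sq + (1/16) * mpB_sq + (1/144) * mpAB_sq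

lemma mpd_3_4 : Complex.normSq (mpV 3 - mpV 4) = (3/2) + (-1/6) * (mpA * mpB) := by
  rw [mpV_3, mpV_4]
  simp only [Complex.normSq_apply, Complex.sub_re, Complex.sub_im]
  linear_combination (1/144) * mpA_sq + (1/16) * mpB_sq + (1/144) * mpAB_sq

lemma mpd_3_5 : Complex.normSq (mpV 3 - mpV 5) = (3/2) + (1/6) * (mpA * mpB) := by
  rw [mpV_3, mpV_5]
  simp only [Complex.normSq_apply, Complex.sub_re, Complex.sub_im]
  linear_combination (1/144) * mpA_sq + (1/16) * mpB_sq + (1/144) * mpAB_sq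

lemma mpd_3_6 : Complex.normSq (mpV 3 - mpV 6) = (1) := by
  rw [mpV_3, mpV_6]
  simp only [Complex.normSq_apply, Complex.sub_re, Complex.sub_im]
  linear_combination (0 : ℝ) * mpA_sq

lemma mpd_4_5 : Complex.normSq (mpV 4 - mpV 5) = (1) := by
  rw [mpV_4, mpV_5]
  simp only [Complex.normSq_apply, Complex.sub_re, Complex.sub_im]
  linear_combination (1/36) * mpA_sq + (1/36) * mpAB_sq

lemma mpd_4_6 : Complex.normSq (mpV 4 - mpV 6) = (1) := by
  rw [mpV_4, mpV_6]
  simp only [Complex.normSq_apply, Complex.sub_re, Complex.sub_im]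
  linear_combination (1/144) * mpA_sq + (1/16) * mpB_sq + (1/144) * mpAB_sq

lemma mpd_5_6 : Complex.normSq (mpV 5 - mpV 6) = (1) := by
  rw [mpV_5, mpV_6]
  simp only [Complex.normSq_apply, Complex.sub_re, Complex.sub_im]
  linear_combination (1/144) * mpA_sq + (1/16) * mpB_sq + (1/144) * mpAB_sq

lemma mpn_0 : Complex.normSq (mpV 0) = (9/11) := by
  rw [mpV_0]
  simp only [Complex.normSq_apply]
  linear_combination (9/121) * mpB_sq

lemma mpn_1 : Complex.normSq (mpV 1) = (7/22) + (-1/22) * (mpA * mpB) := by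
  rw [mpV_1]
  simp only [Complex.normSq_apply]
  linear_combination (1/144) * mpA_sq + (1/1936) * mpB_sq + (1/144) * mpAB_sq

lemma mpn_2 : Complex.normSq (mpV 2) = (7/22) + (1/22) * (mpA * mpB) := by
  rw [mpV_2]
  simp only [Complex.normSq_apply]
  linear_combination (1/144) * mpA_sq + (1/1936) * mpB_sq + (1/144) * mpAB_sq

lemma mpn_3 : Complex.normSq (mpV 3) = (9/11) := by
  rw [mpV_3]
  simp only [Complex.normSq_apply]
  linear_combination (25/484) * mpB_sq

lemma mpn_4 : Complex.normSq (mpV 4) = (7/22) + (-1/22) * (mpA * mpB) := by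
  rw [mpV_4]
  simp only [Complex.normSq_apply]
  linear_combination (1/144) * mpA_sq + (1/1936) * mpB_sq + (1/144) * mpAB_sq

lemma mpn_5 : Complex.normSq (mpV 5) = (7/22) + (1/22) * (mpA * mpB) := by
  rw [mpV_5]
  simp only [Complex.normSq_apply]
  linear_combination (1/144) * mpA_sq + (1/1936) * mpB_sq + (1/144) * mpAB_sq

lemma mpn_6 : Complex.normSq (mpV 6) = (9/11) := by
  rw [mpV_6]
  simp only [Complex.normSq_apply]
  linear_combination (25/484) * mpB_sq

lemma mpne_0_1 : mpV 0 ≠ mpV 1 := by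
  intro h
  have h0 : Complex.normSq (mpV 0 - mpV 1) = 0 := by rw [h, sub_self, map_zero]
  rw [mpd_0_1] at h0
  norm_num at h0

lemma mpne_0_2 : mpV 0 ≠ mpV 2 := by
  intro h
  have h0 : Complex.normSq (mpV 0 - mpV 2) = 0 := by rw [h, sub_self, map_zero]
  rw [mpd_0_2] at h0
  norm_num at h0

lemma mpne_0_3 : mpV 0 ≠ mpV 3 := by
  intro h
  have h0 : Complex.normSq (mpV 0 - mpV 3) = 0 := by rw [h, sub_self, map_zero]
  rw [mpd_0_3] at h0
  norm_num at h0

lemma mpne_0_4 : mpV 0 ≠ mpV 4 := by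
  intro h
  have h0 : Complex.normSq (mpV 0 - mpV 4) = 0 := by rw [h, sub_self, map_zero]
  rw [mpd_0_4] at h0
  norm_num at h0

lemma mpne_0_5 : mpV 0 ≠ mpV 5 := by
  intro h
  have h0 : Complex.normSq (mpV 0 - mpV 5) = 0 := by rw [h, sub_self, map_zero]
  rw [mpd_0_5] at h0
  norm_num at h0

lemma mpne_0_6 : mpV 0 ≠ mpV 6 := by
  intro h
  have h0 : Complex.normSq (mpV 0 - mpV 6) = 0 := by rw [h, sub_self, map_zero]
  rw [mpd_0_6] at h0
  norm_num at h0

lemma mpne_1_2 : mpV 1 ≠ mpV 2 := by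
  intro h
  have h0 : Complex.normSq (mpV 1 - mpV 2) = 0 := by rw [h, sub_self, map_zero]
  rw [mpd_1_2] at h0
  norm_num at h0

lemma mpne_1_3 : mpV 1 ≠ mpV 3 := by
  intro h
  have h0 : Complex.normSq (mpV 1 - mpV 3) = 0 := by rw [h, sub_self, map_zero]
  rw [mpd_1_3] at h0
  norm_num at h0

lemma mpne_1_4 : mpV 1 ≠ mpV 4 := by
  intro h
  have h0 : Complex.normSq (mpV 1 - mpV 4) = 0 := by rw [h, sub_self, map_zero]
  rw [mpd_1_4] at h0
  have hq : mpA * mpB = (7) := by linarith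
  have h33 := mpAB_sq
  rw [hq] at h33
  norm_num at h33

lemma mpne_1_5 : mpV 1 ≠ mpV 5 := by
  intro h
  have h0 : Complex.normSq (mpV 1 - mpV 5) = 0 := by rw [h, sub_self, map_zero]
  rw [mpd_1_5] at h0
  norm_num at h0

lemma mpne_1_6 : mpV 1 ≠ mpV 6 := by
  intro h
  have h0 : Complex.normSq (mpV 1 - mpV 6) = 0 := by rw [h, sub_self, map_zero]
  rw [mpd_1_6] at h0
  have hq : mpA * mpB = (9) := by linarith
  have h33 := mpAB_sq
  rw [hq] at h33
  norm_num at h33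

lemma mpne_2_3 : mpV 2 ≠ mpV 3 := by
  intro h
  have h0 : Complex.normSq (mpV 2 - mpV 3) = 0 := by rw [h, sub_self, map_zero]
  rw [mpd_2_3] at h0
  norm_num at h0

lemma mpne_2_4 : mpV 2 ≠ mpV 4 := by
  intro h
  have h0 : Complex.normSq (mpV 2 - mpV 4) = 0 := by rw [h, sub_self, map_zero]
  rw [mpd_2_4] at h0
  norm_num at h0

lemma mpne_2_5 : mpV 2 ≠ mpV 5 := by
  intro h
  have h0 : Complex.normSq (mpV 2 - mpV 5) = 0 := by rw [h, sub_self, map_zero]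
  rw [mpd_2_5] at h0
  have hq : mpA * mpB = (-7) := by linarith
  have h33 := mpAB_sq
  rw [hq] at h33
  norm_num at h33

lemma mpne_2_6 : mpV 2 ≠ mpV 6 := by
  intro h
  have h0 : Complex.normSq (mpV 2 - mpV 6) = 0 := by rw [h, sub_self, map_zero]
  rw [mpd_2_6] at h0
  have hq : mpA * mpB = (-9) := by linarith
  have h33 := mpAB_sq
  rw [hq] at h33
  norm_num at h33

lemma mpne_3_4 : mpV 3 ≠ mpV 4 := by
  intro h
  have h0 : Complex.normSq (mpV 3 - mpV 4) = 0 := by rw [h, sub_self, map_zero]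
  rw [mpd_3_4] at h0
  have hq : mpA * mpB = (9) := by linarith
  have h33 := mpAB_sq
  rw [hq] at h33
  norm_num at h33

lemma mpne_3_5 : mpV 3 ≠ mpV 5 := by
  intro h
  have h0 : Complex.normSq (mpV 3 - mpV 5) = 0 := by rw [h, sub_self, map_zero]
  rw [mpd_3_5] at h0
  have hq : mpA * mpB = (-9) := by linarith
  have h33 := mpAB_sq
  rw [hq] at h33
  norm_num at h33

lemma mpne_3_6 : mpV 3 ≠ mpV 6 := by
  intro h
  have h0 : Complex.normSq (mpV 3 - mpV 6) = 0 := by rw [h, sub_self, map_zero]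
  rw [mpd_3_6] at h0
  norm_num at h0

lemma mpne_4_5 : mpV 4 ≠ mpV 5 := by
  intro h
  have h0 : Complex.normSq (mpV 4 - mpV 5) = 0 := by rw [h, sub_self, map_zero]
  rw [mpd_4_5] at h0
  norm_num at h0

lemma mpne_4_6 : mpV 4 ≠ mpV 6 := by
  intro h
  have h0 : Complex.normSq (mpV 4 - mpV 6) = 0 := by rw [h, sub_self, map_zero]
  rw [mpd_4_6] at h0
  norm_num at h0

lemma mpne_5_6 : mpV 5 ≠ mpV 6 := by
  intro h
  have h0 : Complex.normSq (mpV 5 - mpV 6) = 0 := by rw [h, sub_self, map_zero]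
  rw [mpd_5_6] at h0
  norm_num at h0

lemma mpiff_0_0 : ‖mpV 0 - mpV 0‖ = 1 ↔ moserAdj 0 0 := by
  rw [sub_self, norm_zero]
  exact iff_of_false (by norm_num) (by unfold moserAdj; decide)

lemma mpiff_0_1 : ‖mpV 0 - mpV 1‖ = 1 ↔ moserAdj 0 1 := by
  exact iff_of_true (norm_eq_one_of mpd_0_1) (by unfold moserAdj; decide)

lemma mpiff_0_2 : ‖mpV 0 - mpV 2‖ = 1 ↔ moserAdj 0 2 := by
  exact iff_of_true (norm_eq_one_of mpd_0_2) (by unfold moserAdj; decide)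

lemma mpiff_0_3 : ‖mpV 0 - mpV 3‖ = 1 ↔ moserAdj 0 3 := by
  refine iff_of_false (norm_ne_one_of ?_) (by unfold moserAdj; decide)
  rw [mpd_0_3]
  norm_num

lemma mpiff_0_4 : ‖mpV 0 - mpV 4‖ = 1 ↔ moserAdj 0 4 := by
  exact iff_of_true (norm_eq_one_of mpd_0_4) (by unfold moserAdj; decide)

lemma mpiff_0_5 : ‖mpV 0 - mpV 5‖ = 1 ↔ moserAdj 0 5 := by
  exact iff_of_true (norm_eq_one_of mpd_0_5) (by unfold moserAdj; decide)

lemma mpiff_0_6 : ‖mpV 0 - mpV 6‖ = 1 ↔ moserAdj 0 6 := by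
  refine iff_of_false (norm_ne_one_of ?_) (by unfold moserAdj; decide)
  rw [mpd_0_6]
  norm_num

lemma mpiff_1_0 : ‖mpV 1 - mpV 0‖ = 1 ↔ moserAdj 1 0 := by
  rw [norm_sub_rev]
  exact iff_of_true (norm_eq_one_of mpd_0_1) (by unfold moserAdj; decide)

lemma mpiff_1_1 : ‖mpV 1 - mpV 1‖ = 1 ↔ moserAdj 1 1 := by
  rw [sub_self, norm_zero]
  exact iff_of_false (by norm_num) (by unfold moserAdj; decide)

lemma mpiff_1_2 : ‖mpV 1 - mpV 2‖ = 1 ↔ moserAdj 1 2 := by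
  exact iff_of_true (norm_eq_one_of mpd_1_2) (by unfold moserAdj; decide)

lemma mpiff_1_3 : ‖mpV 1 - mpV 3‖ = 1 ↔ moserAdj 1 3 := by
  exact iff_of_true (norm_eq_one_of mpd_1_3) (by unfold moserAdj; decide)

lemma mpiff_1_4 : ‖mpV 1 - mpV 4‖ = 1 ↔ moserAdj 1 4 := by
  refine iff_of_false (norm_ne_one_of ?_) (by unfold moserAdj; decide)
  rw [mpd_1_4]
  intro h0
  have hq : mpA * mpB = (1) := by linarith
  have h33 := mpAB_sq
  rw [hq] at h33
  norm_num at h33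

lemma mpiff_1_5 : ‖mpV 1 - mpV 5‖ = 1 ↔ moserAdj 1 5 := by
  refine iff_of_false (norm_ne_one_of ?_) (by unfold moserAdj; decide)
  rw [mpd_1_5]
  norm_num

lemma mpiff_1_6 : ‖mpV 1 - mpV 6‖ = 1 ↔ moserAdj 1 6 := by
  refine iff_of_false (norm_ne_one_of ?_) (by unfold moserAdj; decide)
  rw [mpd_1_6]
  intro h0
  have hq : mpA * mpB = (3) := by linarith
  have h33 := mpAB_sq
  rw [hq] at h33
  norm_num at h33

lemma mpiff_2_0 : ‖mpV 2 - mpV 0‖ = 1 ↔ moserAdj 2 0 := by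
  rw [norm_sub_rev]
  exact iff_of_true (norm_eq_one_of mpd_0_2) (by unfold moserAdj; decide)

lemma mpiff_2_1 : ‖mpV 2 - mpV 1‖ = 1 ↔ moserAdj 2 1 := by
  rw [norm_sub_rev]
  exact iff_of_true (norm_eq_one_of mpd_1_2) (by unfold moserAdj; decide)

lemma mpiff_2_2 : ‖mpV 2 - mpV 2‖ = 1 ↔ moserAdj 2 2 := by
  rw [sub_self, norm_zero]
  exact iff_of_false (by norm_num) (by unfold moserAdj; decide)

lemma mpiff_2_3 : ‖mpV 2 - mpV 3‖ = 1 ↔ moserAdj 2 3 := by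
  exact iff_of_true (norm_eq_one_of mpd_2_3) (by unfold moserAdj; decide)

lemma mpiff_2_4 : ‖mpV 2 - mpV 4‖ = 1 ↔ moserAdj 2 4 := by
  refine iff_of_false (norm_ne_one_of ?_) (by unfold moserAdj; decide)
  rw [mpd_2_4]
  norm_num

lemma mpiff_2_5 : ‖mpV 2 - mpV 5‖ = 1 ↔ moserAdj 2 5 := by
  refine iff_of_false (norm_ne_one_of ?_) (by unfold moserAdj; decide)
  rw [mpd_2_5]
  intro h0
  have hq : mpA * mpB = (-1) := by linarith
  have h33 := mpAB_sq
  rw [hq] at h33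
  norm_num at h33

lemma mpiff_2_6 : ‖mpV 2 - mpV 6‖ = 1 ↔ moserAdj 2 6 := by
  refine iff_of_false (norm_ne_one_of ?_) (by unfold moserAdj; decide)
  rw [mpd_2_6]
  intro h0
  have hq : mpA * mpB = (-3) := by linarith
  have h33 := mpAB_sq
  rw [hq] at h33
  norm_num at h33

lemma mpiff_3_0 : ‖mpV 3 - mpV 0‖ = 1 ↔ moserAdj 3 0 := by
  rw [norm_sub_rev]
  refine iff_of_false (norm_ne_one_of ?_) (by unfold moserAdj; decide)
  rw [mpd_0_3]
  norm_num

lemma mpiff_3_1 : ‖mpV 3 - mpV 1‖ = 1 ↔ moserAdj 3 1 := by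
  rw [norm_sub_rev]
  exact iff_of_true (norm_eq_one_of mpd_1_3) (by unfold moserAdj; decide)

lemma mpiff_3_2 : ‖mpV 3 - mpV 2‖ = 1 ↔ moserAdj 3 2 := by
  rw [norm_sub_rev]
  exact iff_of_true (norm_eq_one_of mpd_2_3) (by unfold moserAdj; decide)

lemma mpiff_3_3 : ‖mpV 3 - mpV 3‖ = 1 ↔ moserAdj 3 3 := by
  rw [sub_self, norm_zero]
  exact iff_of_false (by norm_num) (by unfold moserAdj; decide)

lemma mpiff_3_4 : ‖mpV 3 - mpV 4‖ = 1 ↔ moserAdj 3 4 := by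
  refine iff_of_false (norm_ne_one_of ?_) (by unfold moserAdj; decide)
  rw [mpd_3_4]
  intro h0
  have hq : mpA * mpB = (3) := by linarith
  have h33 := mpAB_sq
  rw [hq] at h33
  norm_num at h33

lemma mpiff_3_5 : ‖mpV 3 - mpV 5‖ = 1 ↔ moserAdj 3 5 := by
  refine iff_of_false (norm_ne_one_of ?_) (by unfold moserAdj; decide)
  rw [mpd_3_5]
  intro h0
  have hq : mpA * mpB = (-3) := by linarith
  have h33 := mpAB_sq
  rw [hq] at h33
  norm_num at h33

lemma mpiff_3_6 : ‖mpV 3 - mpV 6‖ = 1 ↔ moserAdj 3 6 := by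
  exact iff_of_true (norm_eq_one_of mpd_3_6) (by unfold moserAdj; decide)

lemma mpiff_4_0 : ‖mpV 4 - mpV 0‖ = 1 ↔ moserAdj 4 0 := by
  rw [norm_sub_rev]
  exact iff_of_true (norm_eq_one_of mpd_0_4) (by unfold moserAdj; decide)

lemma mpiff_4_1 : ‖mpV 4 - mpV 1‖ = 1 ↔ moserAdj 4 1 := by
  rw [norm_sub_rev]
  refine iff_of_false (norm_ne_one_of ?_) (by unfold moserAdj; decide)
  rw [mpd_1_4]
  intro h0
  have hq : mpA * mpB = (1) := by linarith
  have h33 := mpAB_sq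
  rw [hq] at h33
  norm_num at h33

lemma mpiff_4_2 : ‖mpV 4 - mpV 2‖ = 1 ↔ moserAdj 4 2 := by
  rw [norm_sub_rev]
  refine iff_of_false (norm_ne_one_of ?_) (by unfold moserAdj; decide)
  rw [mpd_2_4]
  norm_num

lemma mpiff_4_3 : ‖mpV 4 - mpV 3‖ = 1 ↔ moserAdj 4 3 := by
  rw [norm_sub_rev]
  refine iff_of_false (norm_ne_one_of ?_) (by unfold moserAdj; decide)
  rw [mpd_3_4]
  intro h0
  have hq : mpA * mpB = (3) := by linarith
  have h33 := mpAB_sq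
  rw [hq] at h33
  norm_num at h33

lemma mpiff_4_4 : ‖mpV 4 - mpV 4‖ = 1 ↔ moserAdj 4 4 := by
  rw [sub_self, norm_zero]
  exact iff_of_false (by norm_num) (by unfold moserAdj; decide)

lemma mpiff_4_5 : ‖mpV 4 - mpV 5‖ = 1 ↔ moserAdj 4 5 := by
  exact iff_of_true (norm_eq_one_of mpd_4_5) (by unfold moserAdj; decide)

lemma mpiff_4_6 : ‖mpV 4 - mpV 6‖ = 1 ↔ moserAdj 4 6 := by
  exact iff_of_true (norm_eq_one_of mpd_4_6) (by unfold moserAdj; decide)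

lemma mpiff_5_0 : ‖mpV 5 - mpV 0‖ = 1 ↔ moserAdj 5 0 := by
  rw [norm_sub_rev]
  exact iff_of_true (norm_eq_one_of mpd_0_5) (by unfold moserAdj; decide)

lemma mpiff_5_1 : ‖mpV 5 - mpV 1‖ = 1 ↔ moserAdj 5 1 := by
  rw [norm_sub_rev]
  refine iff_of_false (norm_ne_one_of ?_) (by unfold moserAdj; decide)
  rw [mpd_1_5]
  norm_num

lemma mpiff_5_2 : ‖mpV 5 - mpV 2‖ = 1 ↔ moserAdj 5 2 := by
  rw [norm_sub_rev]
  refine iff_of_false (norm_ne_one_of ?_) (by unfold moserAdj; decide)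
  rw [mpd_2_5]
  intro h0
  have hq : mpA * mpB = (-1) := by linarith
  have h33 := mpAB_sq
  rw [hq] at h33
  norm_num at h33

lemma mpiff_5_3 : ‖mpV 5 - mpV 3‖ = 1 ↔ moserAdj 5 3 := by
  rw [norm_sub_rev]
  refine iff_of_false (norm_ne_one_of ?_) (by unfold moserAdj; decide)
  rw [mpd_3_5]
  intro h0
  have hq : mpA * mpB = (-3) := by linarith
  have h33 := mpAB_sq
  rw [hq] at h33
  norm_num at h33

lemma mpiff_5_4 : ‖mpV 5 - mpV 4‖ = 1 ↔ moserAdj 5 4 := by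
  rw [norm_sub_rev]
  exact iff_of_true (norm_eq_one_of mpd_4_5) (by unfold moserAdj; decide)

lemma mpiff_5_5 : ‖mpV 5 - mpV 5‖ = 1 ↔ moserAdj 5 5 := by
  rw [sub_self, norm_zero]
  exact iff_of_false (by norm_num) (by unfold moserAdj; decide)

lemma mpiff_5_6 : ‖mpV 5 - mpV 6‖ = 1 ↔ moserAdj 5 6 := by
  exact iff_of_true (norm_eq_one_of mpd_5_6) (by unfold moserAdj; decide)

lemma mpiff_6_0 : ‖mpV 6 - mpV 0‖ = 1 ↔ moserAdj 6 0 := by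
  rw [norm_sub_rev]
  refine iff_of_false (norm_ne_one_of ?_) (by unfold moserAdj; decide)
  rw [mpd_0_6]
  norm_num

lemma mpiff_6_1 : ‖mpV 6 - mpV 1‖ = 1 ↔ moserAdj 6 1 := by
  rw [norm_sub_rev]
  refine iff_of_false (norm_ne_one_of ?_) (by unfold moserAdj; decide)
  rw [mpd_1_6]
  intro h0
  have hq : mpA * mpB = (3) := by linarith
  have h33 := mpAB_sq
  rw [hq] at h33
  norm_num at h33

lemma mpiff_6_2 : ‖mpV 6 - mpV 2‖ = 1 ↔ moserAdj 6 2 := by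
  rw [norm_sub_rev]
  refine iff_of_false (norm_ne_one_of ?_) (by unfold moserAdj; decide)
  rw [mpd_2_6]
  intro h0
  have hq : mpA * mpB = (-3) := by linarith
  have h33 := mpAB_sq
  rw [hq] at h33
  norm_num at h33

lemma mpiff_6_3 : ‖mpV 6 - mpV 3‖ = 1 ↔ moserAdj 6 3 := by
  rw [norm_sub_rev]
  exact iff_of_true (norm_eq_one_of mpd_3_6) (by unfold moserAdj; decide)

lemma mpiff_6_4 : ‖mpV 6 - mpV 4‖ = 1 ↔ moserAdj 6 4 := by
  rw [norm_sub_rev]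
  exact iff_of_true (norm_eq_one_of mpd_4_6) (by unfold moserAdj; decide)

lemma mpiff_6_5 : ‖mpV 6 - mpV 5‖ = 1 ↔ moserAdj 6 5 := by
  rw [norm_sub_rev]
  exact iff_of_true (norm_eq_one_of mpd_5_6) (by unfold moserAdj; decide)

lemma mpiff_6_6 : ‖mpV 6 - mpV 6‖ = 1 ↔ moserAdj 6 6 := by
  rw [sub_self, norm_zero]
  exact iff_of_false (by norm_num) (by unfold moserAdj; decide)

lemma norm_formula (z : ℂ) : ‖z‖ = Real.sqrt (Complex.normSq z) := by
  rw [Complex.norm_def]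

lemma norm_bnd {z : ℂ} {lo hi : ℝ} (hlo : 0 ≤ lo) (hhi : 0 ≤ hi)
    (h1 : lo ^ 2 ≤ Complex.normSq z) (h2 : Complex.normSq z ≤ hi ^ 2) :
    lo ≤ ‖z‖ ∧ ‖z‖ ≤ hi := by
  rw [norm_formula]
  constructor
  · calc lo = Real.sqrt (lo ^ 2) := (Real.sqrt_sq hlo).symm
    _ ≤ _ := Real.sqrt_le_sqrt h1
  · calc Real.sqrt (Complex.normSq z) ≤ Real.sqrt (hi ^ 2) := Real.sqrt_le_sqrt h2
    _ = hi := Real.sqrt_sq hhi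

lemma mp_bounds (i : Fin 7) : 1/10 ≤ ‖mpV i‖ ∧ ‖mpV i‖ ≤ 3 / mpB := by
  have hBnn : (0:ℝ) ≤ 3 / mpB := div_nonneg (by norm_num) mpB_pos.le
  have h911 : ((3:ℝ) / mpB) ^ 2 = 9 / 11 := by rw [div_pow, mpB_sq]; norm_num
  fin_cases i
  · show 1/10 ≤ ‖mpV 0‖ ∧ ‖mpV 0‖ ≤ 3 / mpB
    exact norm_bnd (by norm_num) hBnn (by rw [mpn_0]; norm_num) (by rw [mpn_0, h911])
  · show 1/10 ≤ ‖mpV 1‖ ∧ ‖mpV 1‖ ≤ 3 / mpB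
    exact norm_bnd (by norm_num) hBnn (by rw [mpn_1]; nlinarith [mpAB_sq, mpAB_pos]) (by rw [mpn_1, h911]; nlinarith [mpAB_pos])
  · show 1/10 ≤ ‖mpV 2‖ ∧ ‖mpV 2‖ ≤ 3 / mpB
    exact norm_bnd (by norm_num) hBnn (by rw [mpn_2]; nlinarith [mpAB_pos]) (by rw [mpn_2, h911]; nlinarith [mpAB_sq, mpAB_pos])
  · show 1/10 ≤ ‖mpV 3‖ ∧ ‖mpV 3‖ ≤ 3 / mpB
    exact norm_bnd (by norm_num) hBnn (by rw [mpn_3]; norm_num) (by rw [mpn_3, h911])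
  · show 1/10 ≤ ‖mpV 4‖ ∧ ‖mpV 4‖ ≤ 3 / mpB
    exact norm_bnd (by norm_num) hBnn (by rw [mpn_4]; nlinarith [mpAB_sq, mpAB_pos]) (by rw [mpn_4, h911]; nlinarith [mpAB_pos])
  · show 1/10 ≤ ‖mpV 5‖ ∧ ‖mpV 5‖ ≤ 3 / mpB
    exact norm_bnd (by norm_num) hBnn (by rw [mpn_5]; nlinarith [mpAB_pos]) (by rw [mpn_5, h911]; nlinarith [mpAB_sq, mpAB_pos])
  · show 1/10 ≤ ‖mpV 6‖ ∧ ‖mpV 6‖ ≤ 3 / mpB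
    exact norm_bnd (by norm_num) hBnn (by rw [mpn_6]; norm_num) (by rw [mpn_6, h911])

theorem moser_spindle_in_open_annulus (r : ℝ) (hr : 3 / Real.sqrt 11 - 1 / 2 < r) :
    ∃ v : Fin 7 → ℂ, Function.Injective v ∧
      (∀ i, v i ∈ openAnnulus r) ∧
      ∀ i j, ‖v i - v j‖ = 1 ↔ moserAdj i j := by
  have hr' : 3 / mpB - 1 / 2 < r := hr
  have hb10 : (9:ℝ)/10 < 3 / mpB := by
    rw [lt_div_iff₀ mpB_pos]
    nlinarith [mpB_sq, mpB_pos]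
  refine ⟨mpV, ?_, ?_, ?_⟩
  · intro i j h
    fin_cases i <;> fin_cases j
    · rfl
    · exact absurd h mpne_0_1
    · exact absurd h mpne_0_2
    · exact absurd h mpne_0_3
    · exact absurd h mpne_0_4
    · exact absurd h mpne_0_5
    · exact absurd h mpne_0_6
    · exact absurd h.symm mpne_0_1
    · rfl
    · exact absurd h mpne_1_2
    · exact absurd h mpne_1_3
    · exact absurd h mpne_1_4
    · exact absurd h mpne_1_5
    · exact absurd h mpne_1_6
    · exact absurd h.symm mpne_0_2
    · exact absurd h.symm mpne_1_2
    · rfl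
    · exact absurd h mpne_2_3
    · exact absurd h mpne_2_4
    · exact absurd h mpne_2_5
    · exact absurd h mpne_2_6
    · exact absurd h.symm mpne_0_3
    · exact absurd h.symm mpne_1_3
    · exact absurd h.symm mpne_2_3
    · rfl
    · exact absurd h mpne_3_4
    · exact absurd h mpne_3_5
    · exact absurd h mpne_3_6
    · exact absurd h.symm mpne_0_4
    · exact absurd h.symm mpne_1_4
    · exact absurd h.symm mpne_2_4
    · exact absurd h.symm mpne_3_4
    · rfl
    · exact absurd h mpne_4_5
    · exact absurd h mpne_4_6
    · exact absurd h.symm mpne_0_5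
    · exact absurd h.symm mpne_1_5
    · exact absurd h.symm mpne_2_5
    · exact absurd h.symm mpne_3_5
    · exact absurd h.symm mpne_4_5
    · rfl
    · exact absurd h mpne_5_6
    · exact absurd h.symm mpne_0_6
    · exact absurd h.symm mpne_1_6
    · exact absurd h.symm mpne_2_6
    · exact absurd h.symm mpne_3_6
    · exact absurd h.symm mpne_4_6
    · exact absurd h.symm mpne_5_6
    · rfl
  · intro i
    obtain ⟨h1, h2⟩ := mp_bounds i
    simp only [openAnnulus, Set.mem_setOf_eq]
    constructor <;> linarith
  · intro i j
    fin_cases i <;> fin_cases j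
    · exact mpiff_0_0
    · exact mpiff_0_1
    · exact mpiff_0_2
    · exact mpiff_0_3
    · exact mpiff_0_4
    · exact mpiff_0_5
    · exact mpiff_0_6
    · exact mpiff_1_0
    · exact mpiff_1_1
    · exact mpiff_1_2
    · exact mpiff_1_3
    · exact mpiff_1_4
    · exact mpiff_1_5
    · exact mpiff_1_6
    · exact mpiff_2_0
    · exact mpiff_2_1
    · exact mpiff_2_2
    · exact mpiff_2_3
    · exact mpiff_2_4
    · exact mpiff_2_5
    · exact mpiff_2_6
    · exact mpiff_3_0
    · exact mpiff_3_1
    · exact mpiff_3_2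
    · exact mpiff_3_3
    · exact mpiff_3_4
    · exact mpiff_3_5
    · exact mpiff_3_6
    · exact mpiff_4_0
    · exact mpiff_4_1
    · exact mpiff_4_2
    · exact mpiff_4_3
    · exact mpiff_4_4
    · exact mpiff_4_5
    · exact mpiff_4_6
    · exact mpiff_5_0
    · exact mpiff_5_1
    · exact mpiff_5_2
    · exact mpiff_5_3
    · exact mpiff_5_4
    · exact mpiff_5_5
    · exact mpiff_5_6
    · exact mpiff_6_0
    · exact mpiff_6_1
    · exact mpiff_6_2
    · exact mpiff_6_3
    · exact mpiff_6_4
    · exact mpiff_6_5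
    · exact mpiff_6_6
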